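/- Let L be a Lie algebra over a field F of characteristic not 2, let x, y, z ∈ L with y extremal with extremal functional f_y, and suppose f(x,y) ≠ 0 ≠ f(y,z) where f is the extremal form. Set s = f(x,[y,z])/(f(x,y)·f(y,z)) and x̂ = exp(s·ad y)(x) = x + s[y,x] + (s²/2)·f(y,x)·y. Then f(x̂, [y,z]) = 0 and f(x̂, y) = f(x,y). -/

import Mathlib

/-- for extremal `x, y, z` with `f(x,y) ≠ 0 ≠ f(y,z)`, setting
`s = f(x,[y,z])/(f(x,y)·f(y,z))` and `x̂ = exp(s·ad y)(x) = x + s[y,x] + (s²/2)f(y,x)·y`,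
one has `f(x̂,[y,z]) = 0` and `f(x̂,y) = f(x,y)`. -/
theorem exp_ad_kills_form_value {F L : Type*} [Field F] [LieRing L] [LieAlgebra F L]
    (h2 : (2 : F) ≠ 0) (f : L →ₗ[F] L →ₗ[F] F)
    (hsymm : ∀ a b : L, f a b = f b a)
    (hassoc : ∀ a b c : L, f ⁅a, b⁆ c = f a ⁅b, c⁆)
    (hgen : LieSubalgebra.lieSpan F L
      {w : L | w ≠ 0 ∧ ∀ a : L, ⁅w, ⁅w, a⁆⁆ = f w a • w} = ⊤)
    (x y z : L)
    (hx0 : x ≠ 0) (hx : ∀ a : L, ⁅x, ⁅x, a⁆⁆ = f x a • x)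
    (hy0 : y ≠ 0) (hy : ∀ a : L, ⁅y, ⁅y, a⁆⁆ = f y a • y)
    (hz0 : z ≠ 0) (hz : ∀ a : L, ⁅z, ⁅z, a⁆⁆ = f z a • z)
    (hfxy : f x y ≠ 0) (hfyz : f y z ≠ 0)
    (s : F) (hs : s = f x ⁅y, z⁆ / (f x y * f y z))
    (xhat : L) (hxhat : xhat = x + s • ⁅y, x⁆ + (s ^ 2 / 2 * f y x) • y) :
    f xhat ⁅y, z⁆ = 0 ∧ f xhat y = f x y := by
  -- f(y,y) = 0
  have hyy : f y y = 0 := by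
    have h := hy y
    rw [lie_self, lie_zero] at h
    rcases smul_eq_zero.mp h.symm with h' | h'
    · exact h'
    · exact absurd h' hy0
  -- f(y, [y,z]) = 0
  have hyyz : f y ⁅y, z⁆ = 0 := by
    have := hassoc y y z
    rw [lie_self] at this
    simp at this
    exact this.symm
  -- f([y,x], [y,z]) = - f(x,y) * f(y,z)
  have hkey : f ⁅y, x⁆ ⁅y, z⁆ = -(f x y * f y z) := by
    have h1 : f ⁅y, x⁆ ⁅y, z⁆ = - f ⁅x, y⁆ ⁅y, z⁆ := by
      have hn : (⁅y, x⁆ : L) = -⁅x, y⁆ := by rw [← lie_skew]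
      rw [hn, map_neg]; simp
    rw [h1, hassoc x y ⁅y, z⁆, hy z]
    rw [map_smul]
    simp [hsymm x y, mul_comm]
  -- f([y,x], y) = 0
  have hyxy : f ⁅y, x⁆ y = 0 := by
    rw [hassoc y x y, hsymm y ⁅x, y⁆, hassoc x y y, lie_self, map_zero]
  subst hxhat hs
  constructor
  · simp only [map_add, map_smul, LinearMap.add_apply, LinearMap.smul_apply, smul_eq_mul,
      hkey, hyyz]
    field_simp
    ring
  · simp only [map_add, map_smul, LinearMap.add_apply, LinearMap.smul_apply, smul_eq_mul,
      hyxy, hyy]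
    ring
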